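/- Let α and β be exponent sequences. If log n = O(α_n) and log n = O(β_n), then log n = O((α♯β)_n), where α♯β is the non-decreasing rearrangement of {α_k + β_n : (k,n) ∈ ℕ²}. -/

import Mathlib

open Filter Asymptotics

/-- An exponent sequence: non-decreasing, non-negative, tending to infinity. -/
def ExpSeq (α : ℕ → ℝ) : Prop :=
  Monotone α ∧ (∀ n, 0 ≤ α n) ∧ Tendsto α atTop atTop

/-- Counting function ν_α(s) = #{n : α_n ≤ s}. -/
noncomputable def nu (α : ℕ → ℝ) (s : ℝ) : ℕ := Nat.card {n : ℕ | α n ≤ s}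

/-- Counting function of the ♯-product: ν_{α♯β}(s) = #{(k,n) : α_k + β_n ≤ s}. -/
noncomputable def nu2 (α β : ℕ → ℝ) (s : ℝ) : ℕ :=
  Nat.card {p : ℕ × ℕ | α p.1 + β p.2 ≤ s}

/-- `γ` is the non-decreasing rearrangement α♯β of the family (α_k + β_n):
it is non-decreasing and has the same counting function as the double family. -/
def IsSharp (α β γ : ℕ → ℝ) : Prop :=
  Monotone γ ∧ ∀ s : ℝ, nu γ s = nu2 α β s

lemma finite_sub {α : ℕ → ℝ} (h : Tendsto α atTop atTop) (s : ℝ) :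
    {n : ℕ | α n ≤ s}.Finite := by
  obtain ⟨N, hN⟩ := (h.eventually_gt_atTop s).exists_forall_of_atTop
  exact (Set.finite_Iio N).subset fun n hn => by
    by_contra hc
    exact absurd (hN n (not_lt.1 hc)) (not_lt.2 hn)

/-- Bound on the counting function from a log bound. -/
lemma nu_le {α : ℕ → ℝ} (hfin : ∀ s, {n : ℕ | α n ≤ s}.Finite)
    {C A : ℝ} (hC : 0 < C) (hA : 1 ≤ A)
    (hb : ∀ n : ℕ, A ≤ (n : ℝ) → Real.log n ≤ C * α n) (s : ℝ) :
    (nu α s : ℝ) ≤ A + Real.exp (C * s) + 1 := by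
  have hexp : (0:ℝ) ≤ Real.exp (C * s) := (Real.exp_pos _).le
  have hsub : {n : ℕ | α n ≤ s} ⊆ Set.Iic ⌊A + Real.exp (C * s)⌋₊ := by
    intro n hn
    have hle : (n : ℝ) ≤ A + Real.exp (C * s) := by
      rcases lt_or_ge (n : ℝ) A with h | h
      · linarith
      · have h1 : (1:ℝ) ≤ (n : ℝ) := le_trans hA h
        have hlog : Real.log n ≤ C * s :=
          le_trans (hb n h) (mul_le_mul_of_nonneg_left hn hC.le)
        have : (n : ℝ) ≤ Real.exp (C * s) := by
          calc (n : ℝ) = Real.exp (Real.log n) :=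
                (Real.exp_log (by linarith)).symm
            _ ≤ Real.exp (C * s) := Real.exp_le_exp.2 hlog
        linarith
    exact Nat.le_floor hle
  have hcard : nu α s ≤ ⌊A + Real.exp (C * s)⌋₊ + 1 := by
    rw [nu, Nat.card_coe_set_eq]
    calc {n : ℕ | α n ≤ s}.ncard ≤ (Set.Iic ⌊A + Real.exp (C * s)⌋₊).ncard :=
          Set.ncard_le_ncard hsub (Set.finite_Iic _)
      _ = ⌊A + Real.exp (C * s)⌋₊ + 1 := by
          rw [← Finset.coe_Iic, Set.ncard_coe_finset, Nat.card_Iic]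
  calc (nu α s : ℝ) ≤ (⌊A + Real.exp (C * s)⌋₊ : ℝ) + 1 := by exact_mod_cast hcard
    _ ≤ A + Real.exp (C * s) + 1 := by
        have := Nat.floor_le (by linarith : (0:ℝ) ≤ A + Real.exp (C * s))
        linarith

/-- Extract a clean log bound from an `IsBigO` hypothesis. -/
lemma extract {α : ℕ → ℝ} (hpos : ∀ n, 0 ≤ α n)
    (h : (fun n : ℕ => Real.log n) =O[atTop] α) :
    ∃ C A : ℝ, 0 < C ∧ 1 ≤ A ∧ ∀ n : ℕ, A ≤ (n : ℝ) → Real.log n ≤ C * α n := by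
  obtain ⟨c, hc0, hc⟩ := h.exists_pos
  obtain ⟨N, hN⟩ := (hc.bound).exists_forall_of_atTop
  refine ⟨c, max (N : ℝ) 1, hc0, le_max_right _ _, fun n hn => ?_⟩
  have hNn : N ≤ n := by exact_mod_cast le_trans (le_max_left (N:ℝ) 1) hn
  have := hN n hNn
  rw [Real.norm_eq_abs, Real.norm_eq_abs, abs_of_nonneg (hpos n)] at this
  exact le_trans (le_abs_self _) this

theorem stmt5 (α β γ : ℕ → ℝ) (hα : ExpSeq α) (hβ : ExpSeq β)
    (hγ : IsSharp α β γ)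
    (h1 : (fun n : ℕ => Real.log n) =O[atTop] α)
    (h2 : (fun n : ℕ => Real.log n) =O[atTop] β) :
    (fun n : ℕ => Real.log n) =O[atTop] γ := by
  obtain ⟨hαm, hα0, hαt⟩ := hα
  obtain ⟨hβm, hβ0, hβt⟩ := hβ
  obtain ⟨hγm, hγc⟩ := hγ
  obtain ⟨Cα, Aα, hCα, hAα, hbα⟩ := extract hα0 h1
  obtain ⟨Cβ, Aβ, hCβ, hAβ, hbβ⟩ := extract hβ0 h2
  set C : ℝ := max Cα Cβ with hCdef
  have hC : 0 < C := lt_of_lt_of_le hCα (le_max_left _ _)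
  set A : ℝ := max Aα Aβ + 1 with hAdef
  have hA : 1 ≤ A := by
    have := le_max_left Aα Aβ
    simp only [hAdef]; linarith [le_trans hAα (le_max_left Aα Aβ)]
  have hbα' : ∀ n : ℕ, A ≤ (n : ℝ) → Real.log n ≤ C * α n := fun n hn =>
    le_trans (hbα n (by simp only [hAdef] at hn; linarith [le_max_left Aα Aβ]))
      (mul_le_mul_of_nonneg_right (le_max_left _ _) (hα0 n))
  have hbβ' : ∀ n : ℕ, A ≤ (n : ℝ) → Real.log n ≤ C * β n := fun n hn =>
    le_trans (hbβ n (by simp only [hAdef] at hn; linarith [le_max_right Aα Aβ]))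
      (mul_le_mul_of_nonneg_right (le_max_right _ _) (hβ0 n))
  have hfinα := finite_sub hαt
  have hfinβ := finite_sub hβt
  -- nu2 is finite and bounded by the product of the counting functions
  have hsub2 : ∀ s : ℝ, {p : ℕ × ℕ | α p.1 + β p.2 ≤ s} ⊆
      {n : ℕ | α n ≤ s} ×ˢ {n : ℕ | β n ≤ s} := by
    intro s p hp
    exact ⟨by have := hβ0 p.2; simp only [Set.mem_setOf_eq] at hp ⊢; linarith,
      by have := hα0 p.1; simp only [Set.mem_setOf_eq] at hp ⊢; linarith⟩
  have hfin2 : ∀ s : ℝ, {p : ℕ × ℕ | α p.1 + β p.2 ≤ s}.Finite := fun s =>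
    ((hfinα s).prod (hfinβ s)).subset (hsub2 s)
  have hnu2_le : ∀ s : ℝ, nu2 α β s ≤ nu α s * nu β s := by
    intro s
    rw [nu2, nu, nu, Nat.card_coe_set_eq, Nat.card_coe_set_eq, Nat.card_coe_set_eq]
    calc {p : ℕ × ℕ | α p.1 + β p.2 ≤ s}.ncard
        ≤ ({n : ℕ | α n ≤ s} ×ˢ {n : ℕ | β n ≤ s}).ncard :=
          Set.ncard_le_ncard (hsub2 s) ((hfinα s).prod (hfinβ s))
      _ = {n : ℕ | α n ≤ s}.ncard * {n : ℕ | β n ≤ s}.ncard := by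
          simp only [← Nat.card_coe_set_eq]
          rw [Nat.card_congr (Equiv.Set.prod _ _), Nat.card_prod]
  -- the sets {γ ≤ s} are finite
  have hγfin : ∀ s : ℝ, {n : ℕ | γ n ≤ s}.Finite := by
    intro s
    by_contra hinf
    have hinf : {n : ℕ | γ n ≤ s}.Infinite := hinf
    set s' : ℝ := max s (α 0 + β 0) with hs'
    have huniv : {n : ℕ | γ n ≤ s'} = Set.univ := by
      ext n
      simp only [Set.mem_setOf_eq, Set.mem_univ, iff_true]
      obtain ⟨m, hm1, hm2⟩ := hinf.exists_gt n
      exact le_trans (le_trans (hγm hm2.le) hm1) (le_max_left _ _)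
    have h0 : nu γ s' = 0 := by
      rw [nu, huniv]
      simp [Nat.card_eq_zero_of_infinite]
    have h1' : 0 < nu2 α β s' := by
      rw [nu2, Nat.card_coe_set_eq]
      exact (Set.ncard_pos (hfin2 s')).2 ⟨(0, 0), show α 0 + β 0 ≤ s' from le_max_right _ _⟩
    rw [hγc s'] at h0
    omega
  -- γ tends to infinity
  have hγt : Tendsto γ atTop atTop := by
    rw [tendsto_atTop]
    intro s
    have := Set.Finite.eventually_cofinite_notMem (hγfin s)
    rw [Nat.cofinite_eq_atTop] at this
    filter_upwards [this] with n hn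
    exact le_of_not_ge hn
  -- the key counting inequality: m + 1 ≤ nu γ (γ m)
  have hkey : ∀ m : ℕ, m + 1 ≤ nu γ (γ m) := by
    intro m
    rw [nu, Nat.card_coe_set_eq]
    calc m + 1 = (Set.Iic m).ncard := by
          rw [← Finset.coe_Iic, Set.ncard_coe_finset, Nat.card_Iic]
      _ ≤ {n : ℕ | γ n ≤ γ m}.ncard :=
          Set.ncard_le_ncard (fun n hn => hγm hn) (hγfin _)
  -- final estimate
  rw [isBigO_iff]
  refine ⟨2 * C + Real.log 9, ?_⟩
  have hev1 : ∀ᶠ m : ℕ in atTop, max 1 (Real.log A / C) ≤ γ m :=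
    hγt.eventually_ge_atTop _
  filter_upwards [hev1, eventually_ge_atTop 1] with m hγm1 hm1
  have hγ1 : (1:ℝ) ≤ γ m := le_trans (le_max_left _ _) hγm1
  have hAexp : A ≤ Real.exp (C * γ m) := by
    have h2' : Real.log A ≤ C * γ m := by
      have := le_trans (le_max_right _ _) hγm1
      calc Real.log A = C * (Real.log A / C) := by field_simp
        _ ≤ C * γ m := mul_le_mul_of_nonneg_left this hC.le
    calc A = Real.exp (Real.log A) := (Real.exp_log (by linarith)).symm
      _ ≤ Real.exp (C * γ m) := Real.exp_le_exp.2 h2'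
  set E : ℝ := Real.exp (C * γ m) with hE
  have hE1 : (1:ℝ) ≤ E := le_trans hA hAexp
  -- m + 1 ≤ (A + E + 1)^2 ≤ (3 E)^2... use careful bound
  have hmain : (m : ℝ) + 1 ≤ (A + E + 1) * (A + E + 1) := by
    have h1' := nu_le hfinα hC hA hbα' (γ m)
    have h2' := nu_le hfinβ hC hA hbβ' (γ m)
    have hchain : (m : ℝ) + 1 ≤ (nu α (γ m) : ℝ) * (nu β (γ m) : ℝ) := by
      have := le_trans (hkey m) (le_of_eq (hγc (γ m)))
      have := le_trans this (hnu2_le (γ m))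
      calc (m : ℝ) + 1 ≤ ((nu α (γ m) * nu β (γ m) : ℕ) : ℝ) := by exact_mod_cast this
        _ = (nu α (γ m) : ℝ) * (nu β (γ m) : ℝ) := by push_cast; ring
    refine le_trans hchain (mul_le_mul h1' h2' (Nat.cast_nonneg _) ?_)
    linarith
  have h4E : (m : ℝ) + 1 ≤ 9 * (E * E) := by nlinarith
  have hlog : Real.log m ≤ Real.log 9 + 2 * (C * γ m) := by
    have hm0 : (1:ℝ) ≤ (m:ℝ) := by exact_mod_cast hm1
    calc Real.log m ≤ Real.log (9 * (E * E)) := by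
          apply Real.log_le_log (by linarith)
          nlinarith
      _ = Real.log 9 + 2 * (C * γ m) := by
          rw [Real.log_mul (by norm_num) (by positivity), hE, ← Real.exp_add,
            Real.log_exp]
          ring
  have hm0 : (1:ℝ) ≤ (m:ℝ) := by exact_mod_cast hm1
  have hlogm0 : 0 ≤ Real.log m := Real.log_nonneg hm0
  rw [Real.norm_eq_abs, Real.norm_eq_abs, abs_of_nonneg hlogm0,
    abs_of_nonneg (by linarith : (0:ℝ) ≤ γ m)]
  have hlog4 : (0:ℝ) ≤ Real.log 9 := Real.log_nonneg (by norm_num)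
  calc Real.log m ≤ Real.log 9 + 2 * (C * γ m) := hlog
    _ ≤ Real.log 9 * γ m + 2 * C * γ m := by nlinarith
    _ = (2 * C + Real.log 9) * γ m := by ring
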